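/- arXiv:2011.08360 — 2 statements merged into one kernel-verified Lean document; each statement's English description precedes it below -/
import Mathlib

section
/- Let X̄ ∈ ℝ^{p₁×p₂} be a rank-r matrix with singular value decomposition X̄ = Ū Σ̄ V̄ᵀ, and let Uᵗ ∈ ℝ^{p₁×r} have orthonormal columns. If B = Uᵗᵀ X̄ Vᵗ is invertible (where Vᵗ ∈ ℝ^{p₂×r} has orthonormal columns), then X̄ Vᵗ (Uᵗᵀ X̄ Vᵗ)⁻¹ (X̄ᵀ Uᵗ)ᵀ = X̄. -/
open Matrix
noncomputable section

/-- Frobenius norm of a real matrix. -/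
def frob {m n : Type*} [Fintype m] [Fintype n] (A : Matrix m n ℝ) : ℝ :=
  Real.sqrt (∑ i, ∑ j, (A i j) ^ 2)

/-- Spectral (operator ℓ²→ℓ²) norm of a real matrix. -/
def spec {m n : Type*} [Fintype m] [Fintype n] [DecidableEq n] (A : Matrix m n ℝ) : ℝ :=
  ‖LinearMap.toContinuousLinearMap (Matrix.toEuclideanLin A)‖

/-- Nuclear norm: sum of singular values (square roots of eigenvalues of AᵀA). -/
def nuc {m n : Type*} [Fintype m] [Fintype n] [DecidableEq n] (A : Matrix m n ℝ) : ℝ :=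
  ∑ i, Real.sqrt ((show (Aᵀ * A).IsHermitian by simpa using Matrix.isHermitian_conjTranspose_mul_self A).eigenvalues i)

/-- If X̄ has rank r with SVD X̄ = Ū Σ̄ V̄ᵀ, Uᵗ, Vᵗ have orthonormal columns and
B = Uᵗᵀ X̄ Vᵗ is invertible, then X̄ Vᵗ B⁻¹ (X̄ᵀ Uᵗ)ᵀ = X̄. -/
theorem stmt_0 {p₁ p₂ r : ℕ}
    (Xb : Matrix (Fin p₁) (Fin p₂) ℝ)
    (Ub : Matrix (Fin p₁) (Fin r) ℝ) (Sb : Matrix (Fin r) (Fin r) ℝ)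
    (Vb : Matrix (Fin p₂) (Fin r) ℝ)
    (hXb : Xb = Ub * Sb * Vbᵀ)
    (hUb : Ubᵀ * Ub = 1) (hVb : Vbᵀ * Vb = 1)
    (hrank : Xb.rank = r)
    (Ut : Matrix (Fin p₁) (Fin r) ℝ) (Vt : Matrix (Fin p₂) (Fin r) ℝ)
    (hUt : Utᵀ * Ut = 1) (hVt : Vtᵀ * Vt = 1)
    (hB : IsUnit (Utᵀ * Xb * Vt)) :
    Xb * Vt * (Utᵀ * Xb * Vt)⁻¹ * (Xbᵀ * Ut)ᵀ = Xb := by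
  set A := Utᵀ * Ub with hA
  set C := Vbᵀ * Vt with hC
  have hBeq : Utᵀ * Xb * Vt = A * Sb * C := by
    rw [hXb]; simp only [hA, hC, Matrix.mul_assoc]
  have hdet : IsUnit (A * Sb * C).det := by
    rw [← hBeq]; exact hB.map Matrix.detMonoidHom
  rw [Matrix.det_mul, Matrix.det_mul] at hdet
  have hdA : IsUnit A.det := isUnit_of_mul_isUnit_left (isUnit_of_mul_isUnit_left hdet)
  have hdS : IsUnit Sb.det := isUnit_of_mul_isUnit_right (isUnit_of_mul_isUnit_left hdet)
  have hdC : IsUnit C.det := isUnit_of_mul_isUnit_right hdet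
  have hXV : Xb * Vt = Ub * Sb * C := by rw [hXb]; simp only [hC, Matrix.mul_assoc]
  have hUX : (Xbᵀ * Ut)ᵀ = A * Sb * Vbᵀ := by
    rw [Matrix.transpose_mul, Matrix.transpose_transpose, hXb]
    simp only [hA, Matrix.mul_assoc]
  rw [hBeq, hXV, hUX, Matrix.mul_inv_rev, Matrix.mul_inv_rev, hXb]
  calc Ub * Sb * C * (C⁻¹ * (Sb⁻¹ * A⁻¹)) * (A * Sb * Vbᵀ)
      = Ub * Sb * (C * C⁻¹) * Sb⁻¹ * (A⁻¹ * A) * Sb * Vbᵀ := by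
        simp only [Matrix.mul_assoc]
    _ = Ub * Sb * Vbᵀ := by
        rw [Matrix.mul_nonsing_inv _ hdC, Matrix.nonsing_inv_mul _ hdA, Matrix.mul_one]
        rw [Matrix.mul_one, Matrix.mul_assoc (Ub * Sb), Matrix.nonsing_inv_mul _ hdS,
          Matrix.mul_one]
end
end

section
/- Let F, F̂ ∈ ℝ^{p₁×r}, G, Ĝ ∈ ℝ^{r×r}, H, Ĥ ∈ ℝ^{r×p₂}. Suppose G and Ĝ are invertible, ‖F G⁻¹‖ ≤ λ₁, and ‖Ĝ⁻¹ Ĥ‖ ≤ λ₂ (spectral norms). Then ‖F̂ Ĝ⁻¹ Ĥ − F G⁻¹ H‖_F ≤ λ₂ ‖F̂ − F‖_F + λ₁ ‖Ĥ − H‖_F + λ₁ λ₂ ‖Ĝ − G‖_F. -/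
open Matrix
noncomputable section

lemma frob_nonneg {m n : Type*} [Fintype m] [Fintype n] (A : Matrix m n ℝ) : 0 ≤ frob A :=
  Real.sqrt_nonneg _

lemma spec_nonneg {m n : Type*} [Fintype m] [Fintype n] [DecidableEq n] (A : Matrix m n ℝ) :
    0 ≤ spec A := norm_nonneg _

lemma frob_neg {m n : Type*} [Fintype m] [Fintype n] (A : Matrix m n ℝ) : frob (-A) = frob A := by
  simp [frob]

lemma frob_transpose {m n : Type*} [Fintype m] [Fintype n] (A : Matrix m n ℝ) :
    frob Aᵀ = frob A := by
  rw [frob, frob, Finset.sum_comm]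
  rfl

lemma frob_eq_norm {m n : Type*} [Fintype m] [Fintype n] (A : Matrix m n ℝ) :
    frob A = @norm _ (Matrix.frobeniusSeminormedAddCommGroup).toNorm A := by
  rw [Matrix.frobenius_norm_def, frob, Real.sqrt_eq_rpow]
  congr 1
  · congr 1; ext i; congr 1; ext j
    rw [Real.norm_eq_abs, Real.rpow_two, sq_abs]

lemma frob_add_le {m n : Type*} [Fintype m] [Fintype n] (A B : Matrix m n ℝ) :
    frob (A + B) ≤ frob A + frob B := by
  letI := Matrix.frobeniusSeminormedAddCommGroup (α := ℝ) (m := m) (n := n)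
  simp only [frob_eq_norm]
  exact norm_add_le A B

lemma spec_transpose {m n : Type*} [Fintype m] [Fintype n] [DecidableEq m] [DecidableEq n]
    (A : Matrix m n ℝ) : spec Aᵀ = spec A := by
  have h : Aᴴ = Aᵀ := by ext; simp [conjTranspose]
  have := Matrix.l2_opNorm_conjTranspose (𝕜 := ℝ) A
  rw [h] at this
  exact this

lemma frob_mul_le_spec_left {m n l : Type*} [Fintype m] [Fintype n] [Fintype l] [DecidableEq n]
    (A : Matrix m n ℝ) (B : Matrix n l ℝ) :
    frob (A * B) ≤ spec A * frob B := by
  have key : ∀ j, ∑ i, ((A * B) i j) ^ 2 ≤ (spec A) ^ 2 * ∑ i, (B i j) ^ 2 := by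
    intro j
    set x : EuclideanSpace ℝ n := (WithLp.equiv 2 _).symm (fun k => B k j) with hx
    have h1 : ‖Matrix.toEuclideanLin A x‖ ≤ spec A * ‖x‖ :=
      (LinearMap.toContinuousLinearMap (Matrix.toEuclideanLin A)).le_opNorm x
    have h2 : ‖Matrix.toEuclideanLin A x‖ ^ 2 = ∑ i, ((A * B) i j) ^ 2 := by
      rw [EuclideanSpace.norm_eq, Real.sq_sqrt (by positivity)]
      refine Finset.sum_congr rfl fun i _ => ?_
      rw [Real.norm_eq_abs, sq_abs]
      congr 1
    have h3 : ‖x‖ ^ 2 = ∑ i, (B i j) ^ 2 := by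
      rw [EuclideanSpace.norm_eq, Real.sq_sqrt (by positivity)]
      refine Finset.sum_congr rfl fun i _ => ?_
      rw [Real.norm_eq_abs, sq_abs]
      rw [hx]
      rfl
    calc ∑ i, ((A * B) i j) ^ 2 = ‖Matrix.toEuclideanLin A x‖ ^ 2 := h2.symm
      _ ≤ (spec A * ‖x‖) ^ 2 := by
          apply sq_le_sq' _ h1
          nlinarith [norm_nonneg (Matrix.toEuclideanLin A x)]
      _ = (spec A) ^ 2 * ∑ i, (B i j) ^ 2 := by rw [mul_pow, h3]
  rw [frob, frob, Finset.sum_comm]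
  calc Real.sqrt (∑ j, ∑ i, ((A * B) i j) ^ 2)
      ≤ Real.sqrt ((spec A) ^ 2 * ∑ j, ∑ i, (B i j) ^ 2) := by
        apply Real.sqrt_le_sqrt
        rw [Finset.mul_sum]
        exact Finset.sum_le_sum fun j _ => key j
    _ = spec A * Real.sqrt (∑ j, ∑ i, (B i j) ^ 2) := by
        rw [Real.sqrt_mul (sq_nonneg _), Real.sqrt_sq (spec_nonneg A)]
    _ = spec A * Real.sqrt (∑ i, ∑ j, (B i j) ^ 2) := by rw [Finset.sum_comm]

lemma frob_mul_le_spec_right {m n l : Type*} [Fintype m] [Fintype n] [Fintype l]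
    [DecidableEq n] [DecidableEq l] (A : Matrix m n ℝ) (B : Matrix n l ℝ) :
    frob (A * B) ≤ frob A * spec B := by
  calc frob (A * B) = frob (A * B)ᵀ := (frob_transpose _).symm
    _ = frob (Bᵀ * Aᵀ) := by rw [Matrix.transpose_mul]
    _ ≤ spec Bᵀ * frob Aᵀ := frob_mul_le_spec_left _ _
    _ = frob A * spec B := by rw [spec_transpose, frob_transpose, mul_comm]


/-- Perturbation bound for products F G⁻¹ H (Lemma FGH). -/
theorem stmt_6 {p₁ p₂ r : ℕ}
    (F Fh : Matrix (Fin p₁) (Fin r) ℝ) (G Gh : Matrix (Fin r) (Fin r) ℝ)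
    (H Hh : Matrix (Fin r) (Fin p₂) ℝ)
    (hG : IsUnit G) (hGh : IsUnit Gh)
    (lam₁ lam₂ : ℝ)
    (h₁ : spec (F * G⁻¹) ≤ lam₁) (h₂ : spec (Gh⁻¹ * Hh) ≤ lam₂) :
    frob (Fh * Gh⁻¹ * Hh - F * G⁻¹ * H) ≤
      lam₂ * frob (Fh - F) + lam₁ * frob (Hh - H) + lam₁ * lam₂ * frob (Gh - G) := by
  have hGd : IsUnit G.det := (Matrix.isUnit_iff_isUnit_det G).mp hG
  have hGhd : IsUnit Gh.det := (Matrix.isUnit_iff_isUnit_det Gh).mp hGh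
  have hl₁ : 0 ≤ lam₁ := le_trans (spec_nonneg _) h₁
  have hl₂ : 0 ≤ lam₂ := le_trans (spec_nonneg _) h₂
  have hid : Fh * Gh⁻¹ * Hh - F * G⁻¹ * H =
      (Fh - F) * (Gh⁻¹ * Hh) + (F * G⁻¹) * (Hh - H) +
        (F * G⁻¹) * ((G - Gh) * (Gh⁻¹ * Hh)) := by
    simp only [Matrix.sub_mul, Matrix.mul_sub, Matrix.mul_assoc,
      Matrix.nonsing_inv_mul_cancel_left _ _ hGd,
      Matrix.mul_nonsing_inv_cancel_left _ _ hGhd]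
    abel
  rw [hid]
  have t1 : frob ((Fh - F) * (Gh⁻¹ * Hh)) ≤ lam₂ * frob (Fh - F) := by
    calc frob ((Fh - F) * (Gh⁻¹ * Hh)) ≤ frob (Fh - F) * spec (Gh⁻¹ * Hh) :=
          frob_mul_le_spec_right _ _
      _ ≤ frob (Fh - F) * lam₂ := by
          exact mul_le_mul_of_nonneg_left h₂ (frob_nonneg _)
      _ = lam₂ * frob (Fh - F) := mul_comm _ _
  have t2 : frob ((F * G⁻¹) * (Hh - H)) ≤ lam₁ * frob (Hh - H) := by
    calc frob ((F * G⁻¹) * (Hh - H)) ≤ spec (F * G⁻¹) * frob (Hh - H) :=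
          frob_mul_le_spec_left _ _
      _ ≤ lam₁ * frob (Hh - H) := mul_le_mul_of_nonneg_right h₁ (frob_nonneg _)
  have t3 : frob ((F * G⁻¹) * ((G - Gh) * (Gh⁻¹ * Hh))) ≤ lam₁ * lam₂ * frob (Gh - G) := by
    have hneg : frob (G - Gh) = frob (Gh - G) := by
      rw [show G - Gh = -(Gh - G) by abel, frob_neg]
    calc frob ((F * G⁻¹) * ((G - Gh) * (Gh⁻¹ * Hh)))
        ≤ spec (F * G⁻¹) * frob ((G - Gh) * (Gh⁻¹ * Hh)) := frob_mul_le_spec_left _ _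
      _ ≤ lam₁ * frob ((G - Gh) * (Gh⁻¹ * Hh)) :=
          mul_le_mul_of_nonneg_right h₁ (frob_nonneg _)
      _ ≤ lam₁ * (frob (G - Gh) * spec (Gh⁻¹ * Hh)) :=
          mul_le_mul_of_nonneg_left (frob_mul_le_spec_right _ _) hl₁
      _ ≤ lam₁ * (frob (G - Gh) * lam₂) :=
          mul_le_mul_of_nonneg_left (mul_le_mul_of_nonneg_left h₂ (frob_nonneg _)) hl₁
      _ = lam₁ * lam₂ * frob (Gh - G) := by rw [hneg]; ring
  calc frob ((Fh - F) * (Gh⁻¹ * Hh) + (F * G⁻¹) * (Hh - H) +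
        (F * G⁻¹) * ((G - Gh) * (Gh⁻¹ * Hh)))
      ≤ frob ((Fh - F) * (Gh⁻¹ * Hh) + (F * G⁻¹) * (Hh - H)) +
          frob ((F * G⁻¹) * ((G - Gh) * (Gh⁻¹ * Hh))) := frob_add_le _ _
    _ ≤ frob ((Fh - F) * (Gh⁻¹ * Hh)) + frob ((F * G⁻¹) * (Hh - H)) +
          frob ((F * G⁻¹) * ((G - Gh) * (Gh⁻¹ * Hh))) :=
          add_le_add_left (frob_add_le _ _) _
    _ ≤ lam₂ * frob (Fh - F) + lam₁ * frob (Hh - H) + lam₁ * lam₂ * frob (Gh - G) := by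
          exact add_le_add (add_le_add t1 t2) t3
end
end
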